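/- Let N ≠ 0 and b be real constants and let x(ξ) = −1/(Nξ + b) on an interval where Nξ + b > 0. If N satisfies N² + 2kN − (m + (n−2)k²) = 0 for constants k, m, n, then the pair (x, y) with y(ξ) = N·x(ξ) solves the ODE system y' = [m + (n−2)k²]x² − 2kxy and x' = xy on that interval. -/

import Mathlib

/-- x(ξ) = −1/(Nξ + b), y = N·x solve the planar system
y' = [m + (n−2)k²]x² − 2kxy, x' = xy wherever Nξ + b > 0, provided N is a root
of N² + 2kN − (m + (n−2)k²) = 0. -/
theorem stmt_2 (k m n N b : ℝ) (hk : 0 < k) (hm : 1 ≤ m) (hn : 3 ≤ n)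
    (hN0 : N ≠ 0)
    (hN : N ^ 2 + 2 * k * N - (m + (n - 2) * k ^ 2) = 0)
    (x y : ℝ → ℝ)
    (hx : x = fun ξ => -1 / (N * ξ + b))
    (hy : y = fun ξ => N * x ξ) :
    ∀ ξ : ℝ, N * ξ + b > 0 →
      HasDerivAt y ((m + (n - 2) * k ^ 2) * x ξ ^ 2 - 2 * k * x ξ * y ξ) ξ ∧
      HasDerivAt x (x ξ * y ξ) ξ := by
  intro ξ hξ
  have hu : N * ξ + b ≠ 0 := ne_of_gt hξ
  have hlin : HasDerivAt (fun ξ : ℝ => N * ξ + b) N ξ := by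
    simpa using ((hasDerivAt_id ξ).const_mul N).add_const b
  have hxd : HasDerivAt x (N / (N * ξ + b) ^ 2) ξ := by
    rw [hx]
    have := hlin.inv hu
    have h2 : HasDerivAt (fun ξ : ℝ => -(N * ξ + b)⁻¹) (N / (N * ξ + b) ^ 2) ξ := by
      refine this.neg.congr_deriv ?_
      ring
    convert h2 using 2 with t
    ring
  have hx' : x ξ * y ξ = N / (N * ξ + b) ^ 2 := by
    rw [hx, hy, hx]
    field_simp
  have hyd : HasDerivAt y (N * N / (N * ξ + b) ^ 2) ξ := by
    rw [hy]
    have := hxd.const_mul N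
    refine this.congr_deriv ?_
    ring
  have hsum : m + (n - 2) * k ^ 2 = N ^ 2 + 2 * k * N := by linarith
  constructor
  · convert hyd using 1
    rw [hx, hy, hx, hsum]
    field_simp
    ring
  · rw [hx'] ; exact hxd
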